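/- Let 𝒮 be a multiplicative semigroup of nonnegative d×d matrices such that for some C>0 one has C⁻¹ ≤ ‖A‖ ≤ C for all A∈𝒮. Suppose B is a matrix in the convex hull of 𝒮 which is positively irreducible (i.e. Σ_{j=1}^ℓ B^j is entrywise positive for some ℓ≥1). Then ρ(B)=1, and if u,v∈ℝ^d are the entrywise positive right and left eigenvectors of B for the eigenvalue ρ(B)=1, normalized so that v^⊤u=1, then v^⊤Au = 1 for every A∈𝒮. -/

import Mathlib

open Filter Real MeasureTheory

/-- The matrix norm `‖A‖ = ∑_{i,j} |A i j|`. -/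
noncomputable def mnorm {d : ℕ} (A : Matrix (Fin d) (Fin d) ℝ) : ℝ :=
  ∑ i, ∑ j, |A i j|

/-- The product `M_{j₁} ⋯ M_{jₙ}` along a word `w = j₁⋯jₙ`. -/
noncomputable def wordProd {d k : ℕ} (M : Fin k → Matrix (Fin d) (Fin d) ℝ)
    (w : List (Fin k)) : Matrix (Fin d) (Fin d) ℝ :=
  (w.map M).prod

/-- `𝐌` has a uniform Lyapunov exponent modulo 0. -/
def HasULE {d k : ℕ} (M : Fin k → Matrix (Fin d) (Fin d) ℝ) : Prop :=
  ∃ C : ℝ, 0 < C ∧ ∃ lam : ℝ, ∀ w : List (Fin k), w ≠ [] →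
    wordProd M w = 0 ∨
      (C⁻¹ * Real.exp (lam * w.length) ≤ mnorm (wordProd M w) ∧
        mnorm (wordProd M w) ≤ C * Real.exp (lam * w.length))

/-- `𝐌` is irreducible: no nonzero proper subspace is invariant under all `M i`. -/
def MatIrred {d k : ℕ} (M : Fin k → Matrix (Fin d) (Fin d) ℝ) : Prop :=
  ∀ V : Submodule ℝ (Fin d → ℝ),
    (∀ i, ∀ v ∈ V, (M i).mulVec v ∈ V) → V = ⊥ ∨ V = ⊤

/-- `𝐌` is positively irreducible. -/
def PosIrred {d k : ℕ} (M : Fin k → Matrix (Fin d) (Fin d) ℝ) : Prop :=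
  (∀ i a b, 0 ≤ M i a b) ∧
    ∃ ℓ : ℕ, 1 ≤ ℓ ∧ ∀ a b, 0 < (∑ j ∈ Finset.Icc 1 ℓ, (∑ i, M i) ^ j) a b

/-- A single nonnegative matrix is positively irreducible:
some partial sum of its powers is entrywise positive. -/
def PosIrredMat {n : ℕ} (A : Matrix (Fin n) (Fin n) ℝ) : Prop :=
  ∃ ℓ : ℕ, 1 ≤ ℓ ∧ ∀ a b, 0 < (∑ j ∈ Finset.Icc 1 ℓ, A ^ j) a b

section Aux

open Finset Matrix

/-- Helper: `mulVec` of a finite sum of matrices. -/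
lemma aux_sum_mulVec {d : ℕ} {ι : Type*} (t : Finset ι)
    (M : ι → Matrix (Fin d) (Fin d) ℝ) (x : Fin d → ℝ) :
    (∑ j ∈ t, M j).mulVec x = ∑ j ∈ t, (M j).mulVec x := by
  funext i
  simp only [Matrix.mulVec, dotProduct, Matrix.sum_apply, Finset.sum_apply,
    Finset.sum_mul]
  exact Finset.sum_comm

/-- Helper: `vecMul` along a finite sum of matrices. -/
lemma aux_vecMul_sum {d : ℕ} {ι : Type*} (t : Finset ι)
    (M : ι → Matrix (Fin d) (Fin d) ℝ) (x : Fin d → ℝ) :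
    Matrix.vecMul x (∑ j ∈ t, M j) = ∑ j ∈ t, Matrix.vecMul x (M j) := by
  funext i
  simp only [Matrix.vecMul, dotProduct, Matrix.sum_apply, Finset.sum_apply,
    Finset.mul_sum]
  exact Finset.sum_comm

/-- Helper: `vecMul` along a scalar multiple of a matrix. -/
lemma aux_vecMul_smul {d : ℕ} (c : ℝ) (M : Matrix (Fin d) (Fin d) ℝ) (x : Fin d → ℝ) :
    Matrix.vecMul x (c • M) = c • Matrix.vecMul x M := by
  funext i
  simp only [Matrix.vecMul, dotProduct, Matrix.smul_apply, Pi.smul_apply,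
    smul_eq_mul, Finset.mul_sum]
  exact Finset.sum_congr rfl fun j _ => by ring

/-- The convex hull of a multiplicative semigroup is closed under multiplication. -/
lemma aux_hull_mul {d : ℕ} (S : Set (Matrix (Fin d) (Fin d) ℝ))
    (hmul : ∀ A ∈ S, ∀ B ∈ S, A * B ∈ S) :
    ∀ X ∈ convexHull ℝ S, ∀ Y ∈ convexHull ℝ S, X * Y ∈ convexHull ℝ S := by
  have step1 : ∀ Y ∈ S, ∀ X ∈ convexHull ℝ S, X * Y ∈ convexHull ℝ S := by
    intro Y hY
    have hconv : Convex ℝ ((LinearMap.mulRight ℝ Y) ⁻¹' (convexHull ℝ S)) :=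
      (convex_convexHull ℝ S).linear_preimage _
    have hsub : S ⊆ (LinearMap.mulRight ℝ Y) ⁻¹' (convexHull ℝ S) := by
      intro A hA
      simp only [Set.mem_preimage, LinearMap.mulRight_apply]
      exact subset_convexHull ℝ S (hmul A hA Y hY)
    intro X hX
    have := convexHull_min hsub hconv hX
    simpa only [Set.mem_preimage, LinearMap.mulRight_apply] using this
  intro X hX
  have hconv : Convex ℝ ((LinearMap.mulLeft ℝ X) ⁻¹' (convexHull ℝ S)) :=
    (convex_convexHull ℝ S).linear_preimage _
  have hsub : S ⊆ (LinearMap.mulLeft ℝ X) ⁻¹' (convexHull ℝ S) := by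
    intro Y hY
    simp only [Set.mem_preimage, LinearMap.mulLeft_apply]
    exact step1 Y hY X hX
  intro Y hY
  have := convexHull_min hsub hconv hY
  simpa only [Set.mem_preimage, LinearMap.mulLeft_apply] using this

/-- Contraction of the oscillation w.r.t. the Perron eigenvector under a positive matrix. -/
lemma aux_osc {d : ℕ} (hd : 0 < d) (u v : Fin d → ℝ) (hu : ∀ i, 0 < u i) (hv : ∀ i, 0 < v i)
    (huv : dotProduct v u = 1)
    (D : Matrix (Fin d) (Fin d) ℝ) (hD : ∀ i j, 0 < D i j) (hDu : D.mulVec u = u)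
    (hvD : Matrix.vecMul v D = v) :
    ∃ q : ℝ, 0 ≤ q ∧ q < 1 ∧ ∀ x : Fin d → ℝ, ∃ c : ℝ, 0 ≤ c ∧ ∀ k : ℕ, ∀ i,
      |((D ^ k).mulVec x) i - (dotProduct v x) * u i| ≤ u i * (q ^ k * c) := by
  haveI : Nonempty (Fin d) := Fin.pos_iff_nonempty.mp hd
  set mm : (Fin d → ℝ) → ℝ := fun x => univ.inf' univ_nonempty (fun j => x j / u j) with hmm
  set MM : (Fin d → ℝ) → ℝ := fun x => univ.sup' univ_nonempty (fun j => x j / u j) with hMM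
  have fa : ∀ x : Fin d → ℝ, ∀ j, mm x * u j ≤ x j := by
    intro x j
    have h1 : mm x ≤ x j / u j := inf'_le _ (mem_univ j)
    rw [le_div_iff₀ (hu j)] at h1; exact h1
  have fb : ∀ x : Fin d → ℝ, ∀ j, x j ≤ MM x * u j := by
    intro x j
    have h1 : x j / u j ≤ MM x := by
      show x j / u j ≤ univ.sup' univ_nonempty fun j => x j / u j
      exact le_sup' (fun j => x j / u j) (mem_univ j)
    rw [div_le_iff₀ (hu j)] at h1; exact h1
  have fd : ∀ x : Fin d → ℝ, mm x ≤ MM x := by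
    intro x
    obtain ⟨j⟩ := ‹Nonempty (Fin d)›
    have g1 : mm x ≤ x j / u j := inf'_le _ (mem_univ j)
    have g2 : x j / u j ≤ MM x := by
      show x j / u j ≤ univ.sup' univ_nonempty fun j => x j / u j
      exact le_sup' (fun j => x j / u j) (mem_univ j)
    linarith
  have fvx_lo : ∀ x : Fin d → ℝ, mm x ≤ dotProduct v x := by
    intro x
    have : ∀ j, v j * (mm x * u j) ≤ v j * x j := fun j =>
      mul_le_mul_of_nonneg_left (fa x j) (hv j).le
    calc mm x = mm x * dotProduct v u := by rw [huv, mul_one]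
      _ = ∑ j, v j * (mm x * u j) := by
          simp [dotProduct, Finset.mul_sum]
          exact Finset.sum_congr rfl (fun j _ => by ring)
      _ ≤ ∑ j, v j * x j := Finset.sum_le_sum (fun j _ => this j)
      _ = dotProduct v x := rfl
  have fvx_hi : ∀ x : Fin d → ℝ, dotProduct v x ≤ MM x := by
    intro x
    have : ∀ j, v j * x j ≤ v j * (MM x * u j) := fun j =>
      mul_le_mul_of_nonneg_left (fb x j) (hv j).le
    calc dotProduct v x = ∑ j, v j * x j := rfl
      _ ≤ ∑ j, v j * (MM x * u j) := Finset.sum_le_sum (fun j _ => this j)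
      _ = MM x * dotProduct v u := by
          simp [dotProduct, Finset.mul_sum]
          exact Finset.sum_congr rfl (fun j _ => by ring)
      _ = MM x := by rw [huv, mul_one]
  set θ₁ : ℝ := univ.inf' univ_nonempty (fun p : Fin d × Fin d => D p.1 p.2 * u p.2 / u p.1)
    with hθ₁
  have hθ₁pos : 0 < θ₁ := by
    rw [hθ₁, Finset.lt_inf'_iff]
    intro p _
    exact div_pos (mul_pos (hD p.1 p.2) (hu p.2)) (hu p.1)
  set θ : ℝ := min θ₁ 2⁻¹ with hθ
  have hθpos : 0 < θ := lt_min hθ₁pos (by norm_num)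
  have hθhalf : θ ≤ 2⁻¹ := min_le_right _ _
  have hθkey : ∀ i j, θ * u i ≤ D i j * u j := by
    intro i j
    have h1 : θ₁ ≤ D i j * u j / u i := inf'_le _ (mem_univ (i, j))
    have h2 : θ ≤ D i j * u j / u i := le_trans (min_le_left _ _) h1
    rw [le_div_iff₀ (hu i)] at h2; linarith [h2]
  have hDurow : ∀ i, ∑ j, D i j * u j = u i := by
    intro i
    have := congrFun hDu i
    simpa [Matrix.mulVec, dotProduct] using this
  have step_hi : ∀ (x : Fin d → ℝ) (i), (D.mulVec x) i ≤ (MM x - θ * (MM x - mm x)) * u i := by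
    intro x i
    obtain ⟨j₀, -, hj₀⟩ := Finset.exists_mem_eq_inf' (univ_nonempty) (fun j => x j / u j)
    have hxj₀ : x j₀ = mm x * u j₀ := by
      have : mm x = x j₀ / u j₀ := hj₀
      rw [this, div_mul_cancel₀ _ (hu j₀).ne']
    have hsum : (D.mulVec x) i = ∑ j ∈ univ.erase j₀, D i j * x j + D i j₀ * x j₀ := by
      rw [Matrix.mulVec, dotProduct]
      exact (Finset.sum_erase_add univ _ (mem_univ j₀)).symm
    have hb1 : ∑ j ∈ univ.erase j₀, D i j * x j ≤ ∑ j ∈ univ.erase j₀, D i j * (MM x * u j) :=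
      Finset.sum_le_sum (fun j _ => mul_le_mul_of_nonneg_left (fb x j) (hD i j).le)
    have hb2 : ∑ j ∈ univ.erase j₀, D i j * (MM x * u j) = MM x * u i - D i j₀ * u j₀ * MM x := by
      have h3 : ∑ j ∈ univ.erase j₀, D i j * (MM x * u j) + D i j₀ * (MM x * u j₀)
          = ∑ j, D i j * (MM x * u j) := Finset.sum_erase_add univ _ (mem_univ j₀)
      have h4 : ∑ j, D i j * (MM x * u j) = MM x * u i := by
        rw [← hDurow i, Finset.mul_sum]
        exact Finset.sum_congr rfl (fun j _ => by ring)
      linarith [h3, h4]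
    have hkey := hθkey i j₀
    have hosc := fd x
    calc (D.mulVec x) i = ∑ j ∈ univ.erase j₀, D i j * x j + D i j₀ * x j₀ := hsum
      _ ≤ (MM x * u i - D i j₀ * u j₀ * MM x) + D i j₀ * (mm x * u j₀) := by
          rw [hxj₀]; linarith [hb1, hb2]
      _ = MM x * u i - D i j₀ * u j₀ * (MM x - mm x) := by ring
      _ ≤ MM x * u i - θ * u i * (MM x - mm x) := by nlinarith [hkey, hosc]
      _ = (MM x - θ * (MM x - mm x)) * u i := by ring
  have step_lo : ∀ (x : Fin d → ℝ) (i), (mm x + θ * (MM x - mm x)) * u i ≤ (D.mulVec x) i := by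
    intro x i
    obtain ⟨j₀, -, hj₀⟩ := Finset.exists_mem_eq_sup' (univ_nonempty) (fun j => x j / u j)
    have hxj₀ : x j₀ = MM x * u j₀ := by
      have : MM x = x j₀ / u j₀ := hj₀
      rw [this, div_mul_cancel₀ _ (hu j₀).ne']
    have hsum : (D.mulVec x) i = ∑ j ∈ univ.erase j₀, D i j * x j + D i j₀ * x j₀ := by
      rw [Matrix.mulVec, dotProduct]
      exact (Finset.sum_erase_add univ _ (mem_univ j₀)).symm
    have hb1 : ∑ j ∈ univ.erase j₀, D i j * (mm x * u j) ≤ ∑ j ∈ univ.erase j₀, D i j * x j :=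
      Finset.sum_le_sum (fun j _ => mul_le_mul_of_nonneg_left (fa x j) (hD i j).le)
    have hb2 : ∑ j ∈ univ.erase j₀, D i j * (mm x * u j) = mm x * u i - D i j₀ * u j₀ * mm x := by
      have h3 : ∑ j ∈ univ.erase j₀, D i j * (mm x * u j) + D i j₀ * (mm x * u j₀)
          = ∑ j, D i j * (mm x * u j) := Finset.sum_erase_add univ _ (mem_univ j₀)
      have h4 : ∑ j, D i j * (mm x * u j) = mm x * u i := by
        rw [← hDurow i, Finset.mul_sum]
        exact Finset.sum_congr rfl (fun j _ => by ring)
      linarith [h3, h4]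
    have hkey := hθkey i j₀
    have hosc := fd x
    calc (mm x + θ * (MM x - mm x)) * u i
        = mm x * u i + θ * u i * (MM x - mm x) := by ring
      _ ≤ mm x * u i + D i j₀ * u j₀ * (MM x - mm x) := by nlinarith [hkey, hosc]
      _ = (mm x * u i - D i j₀ * u j₀ * mm x) + D i j₀ * (MM x * u j₀) := by ring
      _ ≤ ∑ j ∈ univ.erase j₀, D i j * x j + D i j₀ * x j₀ := by
          rw [hxj₀]; linarith [hb1, hb2]
      _ = (D.mulVec x) i := hsum.symm
  set q : ℝ := 1 - 2 * θ with hq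
  have hq0 : 0 ≤ q := by rw [hq]; linarith [hθhalf]
  have hq1 : q < 1 := by rw [hq]; linarith [hθpos]
  have stepMM : ∀ x, MM (D.mulVec x) ≤ MM x - θ * (MM x - mm x) := by
    intro x
    apply Finset.sup'_le
    intro j _
    rw [div_le_iff₀ (hu j)]
    exact step_hi x j
  have stepmm : ∀ x, mm x + θ * (MM x - mm x) ≤ mm (D.mulVec x) := by
    intro x
    apply Finset.le_inf'
    intro j _
    rw [le_div_iff₀ (hu j)]
    exact step_lo x j
  have osc_step : ∀ x, MM (D.mulVec x) - mm (D.mulVec x) ≤ q * (MM x - mm x) := by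
    intro x
    have h1 := stepMM x
    have h2 := stepmm x
    rw [hq]; linarith
  have osc_iter : ∀ (x : Fin d → ℝ) (k : ℕ),
      MM ((D ^ k).mulVec x) - mm ((D ^ k).mulVec x) ≤ q ^ k * (MM x - mm x) := by
    intro x k
    induction k with
    | zero => simp [Matrix.one_mulVec]
    | succ n ih =>
        have hrw : (D ^ (n + 1)).mulVec x = D.mulVec ((D ^ n).mulVec x) := by
          rw [Matrix.mulVec_mulVec, ← pow_succ']
        rw [hrw]
        calc MM (D.mulVec ((D ^ n).mulVec x)) - mm (D.mulVec ((D ^ n).mulVec x))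
            ≤ q * (MM ((D ^ n).mulVec x) - mm ((D ^ n).mulVec x)) := osc_step _
          _ ≤ q * (q ^ n * (MM x - mm x)) := mul_le_mul_of_nonneg_left ih hq0
          _ = q ^ (n + 1) * (MM x - mm x) := by ring
  have hvDk : ∀ (x : Fin d → ℝ) (k : ℕ),
      dotProduct v ((D ^ k).mulVec x) = dotProduct v x := by
    intro x k
    induction k with
    | zero => simp [Matrix.one_mulVec]
    | succ n ih =>
        have hrw : (D ^ (n + 1)).mulVec x = D.mulVec ((D ^ n).mulVec x) := by
          rw [Matrix.mulVec_mulVec, ← pow_succ']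
        rw [hrw, Matrix.dotProduct_mulVec, hvD, ih]
  refine ⟨q, hq0, hq1, ?_⟩
  intro x
  refine ⟨MM x - mm x, by linarith [fd x], ?_⟩
  intro k i
  set y := (D ^ k).mulVec x with hy
  have h1 : mm y * u i ≤ y i := fa y i
  have h2 : y i ≤ MM y * u i := fb y i
  have h3 : mm y ≤ dotProduct v x := by rw [← hvDk x k]; exact fvx_lo y
  have h4 : dotProduct v x ≤ MM y := by rw [← hvDk x k]; exact fvx_hi y
  have h5 : MM y - mm y ≤ q ^ k * (MM x - mm x) := osc_iter x k
  rw [abs_le]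
  constructor <;> nlinarith [hu i, (hu i).le]

end Aux

set_option maxHeartbeats 2000000 in
theorem stmt8 {d : ℕ} (S : Set (Matrix (Fin d) (Fin d) ℝ))
    (hmul : ∀ A ∈ S, ∀ B ∈ S, A * B ∈ S)
    (hnn : ∀ A ∈ S, ∀ i j, 0 ≤ A i j)
    (C : ℝ) (hC : 0 < C)
    (hbd : ∀ A ∈ S, C⁻¹ ≤ mnorm A ∧ mnorm A ≤ C)
    (B : Matrix (Fin d) (Fin d) ℝ)
    (hB : B ∈ convexHull ℝ S)
    (hirr : PosIrredMat B)
    (rB : ℝ)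
    (hrB : Tendsto (fun n : ℕ => mnorm (B ^ n) ^ ((n : ℝ))⁻¹) atTop (nhds rB)) :
    rB = 1 ∧ ∀ u v : Fin d → ℝ, (∀ i, 0 < u i) → (∀ i, 0 < v i) →
      B.mulVec u = rB • u → Matrix.vecMul v B = rB • v →
      dotProduct v u = 1 →
      ∀ A ∈ S, dotProduct v (A.mulVec u) = 1 := by
  classical
  have hSne : S.Nonempty := by
    by_contra h
    rw [Set.not_nonempty_iff_eq_empty] at h
    rw [h, convexHull_empty] at hB
    exact hB
  obtain ⟨A₀, hA₀⟩ := hSne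
  have hd : 0 < d := by
    by_contra h
    push_neg at h
    have hd0 : d = 0 := Nat.le_zero.mp h
    subst hd0
    have : mnorm A₀ = 0 := by simp [mnorm]
    have h1 := (hbd A₀ hA₀).1
    rw [this] at h1
    have : (0:ℝ) < C⁻¹ := inv_pos.mpr hC
    linarith
  haveI : Nonempty (Fin d) := Fin.pos_iff_nonempty.mp hd
  -- The convex compact "slab" K containing the hull of S
  set K : Set (Matrix (Fin d) (Fin d) ℝ) :=
    {M | (∀ i j, 0 ≤ M i j) ∧ C⁻¹ ≤ ∑ i, ∑ j, M i j ∧ ∑ i, ∑ j, M i j ≤ C} with hK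
  have hKconv : Convex ℝ K := by
    intro M hM N hN a b ha hb hab
    have hsum : (∑ i, ∑ j, (a • M + b • N) i j)
        = a * (∑ i, ∑ j, M i j) + b * (∑ i, ∑ j, N i j) := by
      simp only [Matrix.add_apply, Matrix.smul_apply, smul_eq_mul, Finset.sum_add_distrib,
        Finset.mul_sum]
    refine ⟨?_, ?_, ?_⟩
    · intro i j
      have := hM.1 i j; have := hN.1 i j
      simp only [Matrix.add_apply, Matrix.smul_apply, smul_eq_mul]
      nlinarith [hM.1 i j, hN.1 i j]
    · rw [hsum]
      have e1 : a * C⁻¹ + b * C⁻¹ = C⁻¹ := by rw [← add_mul, hab, one_mul]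
      linarith [mul_le_mul_of_nonneg_left hM.2.1 ha, mul_le_mul_of_nonneg_left hN.2.1 hb]
    · rw [hsum]
      have e1 : a * C + b * C = C := by rw [← add_mul, hab, one_mul]
      linarith [mul_le_mul_of_nonneg_left hM.2.2 ha, mul_le_mul_of_nonneg_left hN.2.2 hb]
  have hSK : S ⊆ K := by
    intro A hA
    have hmn : mnorm A = ∑ i, ∑ j, A i j := by
      unfold mnorm
      exact Finset.sum_congr rfl fun i _ => Finset.sum_congr rfl fun j _ =>
        abs_of_nonneg (hnn A hA i j)
    exact ⟨hnn A hA, by rw [← hmn]; exact (hbd A hA).1, by rw [← hmn]; exact (hbd A hA).2⟩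
  have hullK : convexHull ℝ S ⊆ K := convexHull_min hSK hKconv
  have hmulhull := aux_hull_mul S hmul
  have hBpow : ∀ n : ℕ, 1 ≤ n → B ^ n ∈ convexHull ℝ S := by
    intro n hn
    induction n with
    | zero => omega
    | succ m ih =>
        rcases Nat.eq_zero_or_pos m with hm | hm
        · subst hm; simpa [pow_one] using hB
        · have := ih hm
          rw [pow_succ]
          exact hmulhull _ this _ hB
  have hmnormK : ∀ M ∈ K, C⁻¹ ≤ mnorm M ∧ mnorm M ≤ C := by
    intro M hM
    have hmn : mnorm M = ∑ i, ∑ j, M i j := by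
      unfold mnorm
      exact Finset.sum_congr rfl fun i _ => Finset.sum_congr rfl fun j _ =>
        abs_of_nonneg (hM.1 i j)
    rw [hmn]
    exact ⟨hM.2.1, hM.2.2⟩
  -- rB = 1
  have hinv0 : Tendsto (fun n : ℕ => ((n : ℝ))⁻¹) atTop (nhds 0) :=
    tendsto_natCast_atTop_atTop.inv_tendsto_atTop
  have hhi : Tendsto (fun n : ℕ => C ^ ((n : ℝ))⁻¹) atTop (nhds 1) := by
    have := (tendsto_const_nhds (x := C) (f := atTop (α := ℕ))).rpow hinv0 (Or.inl hC.ne')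
    simpa only [Real.rpow_zero] using this
  have hlo : Tendsto (fun n : ℕ => C⁻¹ ^ ((n : ℝ))⁻¹) atTop (nhds 1) := by
    have := (tendsto_const_nhds (x := C⁻¹) (f := atTop (α := ℕ))).rpow hinv0
      (Or.inl (inv_pos.mpr hC).ne')
    simpa only [Real.rpow_zero] using this
  have hone : Tendsto (fun n : ℕ => mnorm (B ^ n) ^ ((n : ℝ))⁻¹) atTop (nhds 1) := by
    apply tendsto_of_tendsto_of_tendsto_of_le_of_le' hlo hhi
    · filter_upwards [eventually_ge_atTop 1] with n hn
      have hK' := hmnormK _ (hullK (hBpow n hn))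
      exact Real.rpow_le_rpow (inv_pos.mpr hC).le hK'.1 (by positivity)
    · filter_upwards [eventually_ge_atTop 1] with n hn
      have hK' := hmnormK _ (hullK (hBpow n hn))
      have h0 : 0 ≤ mnorm (B ^ n) := le_trans (inv_pos.mpr hC).le hK'.1
      exact Real.rpow_le_rpow h0 hK'.2 (by positivity)
  have hrB1 : rB = 1 := tendsto_nhds_unique hrB hone
  subst hrB1
  refine ⟨rfl, ?_⟩
  intro u v hu hv hBu hvB hvu A hA
  rw [one_smul] at hBu hvB
  -- the positive matrix D
  obtain ⟨ℓ, hℓ, hpos⟩ := hirr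
  have hℓR : (0:ℝ) < (ℓ:ℝ) := by exact_mod_cast Nat.lt_of_lt_of_le Nat.zero_lt_one hℓ
  set D : Matrix (Fin d) (Fin d) ℝ := (ℓ:ℝ)⁻¹ • ∑ j ∈ Finset.Icc 1 ℓ, B ^ j with hD
  have hcard : (Finset.Icc 1 ℓ).card = ℓ := by rw [Nat.card_Icc]; omega
  have hDhull : D ∈ convexHull ℝ S := by
    rw [hD, Finset.smul_sum]
    apply (convex_convexHull ℝ S).sum_mem
    · intro j _; positivity
    · rw [Finset.sum_const, hcard, nsmul_eq_mul]
      field_simp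
    · intro j hj
      exact hBpow j (Finset.mem_Icc.mp hj).1
  have hDpos : ∀ i j, 0 < D i j := by
    intro i j
    rw [hD]
    have := hpos i j
    simp only [Matrix.smul_apply, smul_eq_mul]
    exact mul_pos (inv_pos.mpr hℓR) this
  have hBju : ∀ j : ℕ, (B ^ j).mulVec u = u := by
    intro j
    induction j with
    | zero => simp [Matrix.one_mulVec]
    | succ n ih =>
        rw [pow_succ, ← Matrix.mulVec_mulVec, hBu, ih]
  have hvBj : ∀ j : ℕ, Matrix.vecMul v (B ^ j) = v := by
    intro j
    induction j with
    | zero => simp [Matrix.vecMul_one]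
    | succ n ih =>
        rw [pow_succ, ← Matrix.vecMul_vecMul, ih, hvB]
  have hDu : D.mulVec u = u := by
    rw [hD, Matrix.smul_mulVec, aux_sum_mulVec]
    have : ∑ j ∈ Finset.Icc 1 ℓ, (B ^ j).mulVec u = (ℓ:ℝ) • u := by
      rw [Finset.sum_congr rfl fun j _ => hBju j, Finset.sum_const, hcard]
      simp [← Nat.cast_smul_eq_nsmul ℝ]
    rw [this, smul_smul, inv_mul_cancel₀ hℓR.ne', one_smul]
  have hvD : Matrix.vecMul v D = v := by
    rw [hD, aux_vecMul_smul, aux_vecMul_sum]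
    have : ∑ j ∈ Finset.Icc 1 ℓ, Matrix.vecMul v (B ^ j) = (ℓ:ℝ) • v := by
      rw [Finset.sum_congr rfl fun j _ => hvBj j, Finset.sum_const, hcard]
      simp [← Nat.cast_smul_eq_nsmul ℝ]
    rw [this, smul_smul, inv_mul_cancel₀ hℓR.ne', one_smul]
  -- bounds on f(M) = v ⬝ᵥ M u over K
  set ε : ℝ := Finset.univ.inf' Finset.univ_nonempty (fun i => min (u i) (v i)) with hε
  have hεpos : 0 < ε := by
    rw [hε, Finset.lt_inf'_iff]
    intro i _
    exact lt_min (hu i) (hv i)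
  have hεu : ∀ i, ε ≤ u i := fun i =>
    le_trans (Finset.inf'_le _ (Finset.mem_univ i)) (min_le_left _ _)
  have hεv : ∀ i, ε ≤ v i := fun i =>
    le_trans (Finset.inf'_le _ (Finset.mem_univ i)) (min_le_right _ _)
  set R : ℝ := Finset.univ.sup' Finset.univ_nonempty (fun i => max (u i) (v i)) with hR
  have hRu : ∀ i, u i ≤ R := fun i => by
    have : max (u i) (v i) ≤ R := by
      show max (u i) (v i) ≤ Finset.univ.sup' Finset.univ_nonempty fun i => max (u i) (v i)
      exact Finset.le_sup' (fun i => max (u i) (v i)) (Finset.mem_univ i)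
    exact le_trans (le_max_left _ _) this
  have hRv : ∀ i, v i ≤ R := fun i => by
    have : max (u i) (v i) ≤ R := by
      show max (u i) (v i) ≤ Finset.univ.sup' Finset.univ_nonempty fun i => max (u i) (v i)
      exact Finset.le_sup' (fun i => max (u i) (v i)) (Finset.mem_univ i)
    exact le_trans (le_max_right _ _) this
  have hRpos : 0 < R := lt_of_lt_of_le (hu (Classical.arbitrary _)) (hRu _)
  set α : ℝ := ε * ε * C⁻¹ with hα
  set β : ℝ := R * R * C with hβ
  have hαpos : 0 < α := by positivity
  have hβpos : 0 < β := by positivity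
  have hfexpand : ∀ M : Matrix (Fin d) (Fin d) ℝ,
      dotProduct v (M.mulVec u) = ∑ i, ∑ j, v i * (M i j * u j) := by
    intro M
    simp only [dotProduct, Matrix.mulVec, Finset.mul_sum]
  have hfK : ∀ M ∈ K, α ≤ dotProduct v (M.mulVec u) ∧
      dotProduct v (M.mulVec u) ≤ β := by
    intro M hM
    rw [hfexpand M]
    have hdistr1 : ∑ i, ∑ j, ε * ε * M i j = ε * ε * (∑ i, ∑ j, M i j) := by
      rw [Finset.mul_sum]
      exact Finset.sum_congr rfl fun i _ => by rw [Finset.mul_sum]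
    have hdistr2 : ∑ i, ∑ j, R * R * M i j = R * R * (∑ i, ∑ j, M i j) := by
      rw [Finset.mul_sum]
      exact Finset.sum_congr rfl fun i _ => by rw [Finset.mul_sum]
    constructor
    · have h1 : ∀ i j, ε * ε * M i j ≤ v i * (M i j * u j) := by
        intro i j
        have hvu' : ε * ε ≤ v i * u j :=
          mul_le_mul (hεv i) (hεu j) hεpos.le (le_trans hεpos.le (hεv i))
        calc ε * ε * M i j ≤ (v i * u j) * M i j :=
              mul_le_mul_of_nonneg_right hvu' (hM.1 i j)
          _ = v i * (M i j * u j) := by ring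
      have h2 : ∑ i, ∑ j, ε * ε * M i j ≤ ∑ i, ∑ j, v i * (M i j * u j) :=
        Finset.sum_le_sum fun i _ => Finset.sum_le_sum fun j _ => h1 i j
      have h3 : α ≤ ε * ε * (∑ i, ∑ j, M i j) := by
        rw [hα]
        nlinarith [hM.2.1, hεpos]
      rw [hdistr1] at h2
      linarith
    · have h1 : ∀ i j, v i * (M i j * u j) ≤ R * R * M i j := by
        intro i j
        have hvu' : v i * u j ≤ R * R := mul_le_mul (hRv i) (hRu j) (hu j).le hRpos.le
        calc v i * (M i j * u j) = (v i * u j) * M i j := by ring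
          _ ≤ (R * R) * M i j := mul_le_mul_of_nonneg_right hvu' (hM.1 i j)
      have h2 : ∑ i, ∑ j, v i * (M i j * u j) ≤ ∑ i, ∑ j, R * R * M i j :=
        Finset.sum_le_sum fun i _ => Finset.sum_le_sum fun j _ => h1 i j
      have h3 : R * R * (∑ i, ∑ j, M i j) ≤ β := by
        rw [hβ]
        nlinarith [hM.2.2, hRpos]
      rw [hdistr2] at h2
      linarith
  -- contraction data
  obtain ⟨q, hq0, hq1, hqall⟩ := aux_osc hd u v hu hv hvu D hDpos hDu hvD
  obtain ⟨c, hc0, hcb⟩ := hqall (A.mulVec u)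
  set t : ℝ := dotProduct v (A.mulVec u) with ht
  have hAK : A ∈ K := hSK hA
  have htα : α ≤ t := (hfK A hAK).1
  have htβ : t ≤ β := (hfK A hAK).2
  have htpos : 0 < t := lt_of_lt_of_le hαpos htα
  -- key one-step estimate
  have key : ∀ (M₁ : Matrix (Fin d) (Fin d) ℝ), (∀ i j, 0 ≤ M₁ i j) → ∀ k : ℕ,
      |dotProduct v ((M₁ * (D ^ k * A)).mulVec u)
        - (dotProduct v (M₁.mulVec u)) * t|
      ≤ (dotProduct v (M₁.mulVec u)) * (q ^ k * c) := by
    intro M₁ hM₁ k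
    set w : Fin d → ℝ := Matrix.vecMul v M₁ with hw
    have hwnn : ∀ i, 0 ≤ w i := by
      intro i
      rw [hw]
      unfold Matrix.vecMul dotProduct
      exact Finset.sum_nonneg fun j _ => mul_nonneg (hv j).le (hM₁ j i)
    have e1 : dotProduct v ((M₁ * (D ^ k * A)).mulVec u)
        = ∑ i, w i * ((D ^ k).mulVec (A.mulVec u)) i := by
      rw [← Matrix.mulVec_mulVec, Matrix.dotProduct_mulVec, ← hw]
      rw [← Matrix.mulVec_mulVec]
      rfl
    have e2 : dotProduct v (M₁.mulVec u) = ∑ i, w i * u i := by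
      rw [Matrix.dotProduct_mulVec, ← hw]; rfl
    rw [e1, e2]
    have e3 : ∑ i, w i * ((D ^ k).mulVec (A.mulVec u)) i - (∑ i, w i * u i) * t
        = ∑ i, w i * (((D ^ k).mulVec (A.mulVec u)) i - t * u i) := by
      rw [Finset.sum_mul, ← Finset.sum_sub_distrib]
      exact Finset.sum_congr rfl fun i _ => by ring
    rw [e3]
    calc |∑ i, w i * (((D ^ k).mulVec (A.mulVec u)) i - t * u i)|
        ≤ ∑ i, |w i * (((D ^ k).mulVec (A.mulVec u)) i - t * u i)| :=
          Finset.abs_sum_le_sum_abs _ _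
      _ ≤ ∑ i, w i * (u i * (q ^ k * c)) := by
          apply Finset.sum_le_sum
          intro i _
          rw [abs_mul, abs_of_nonneg (hwnn i)]
          exact mul_le_mul_of_nonneg_left (hcb k i) (hwnn i)
      _ = (∑ i, w i * u i) * (q ^ k * c) := by
          rw [Finset.sum_mul]
          exact Finset.sum_congr rfl fun i _ => by ring
  -- the iterated products E k m = A * (D^k * A)^m
  have hEmem : ∀ k : ℕ, 1 ≤ k → ∀ m : ℕ, A * (D ^ k * A) ^ m ∈ convexHull ℝ S := by
    intro k hk m
    induction m with
    | zero => simpa using subset_convexHull ℝ S hA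
    | succ n ih =>
        have hDk : D ^ k ∈ convexHull ℝ S := by
          have : ∀ n : ℕ, 1 ≤ n → D ^ n ∈ convexHull ℝ S := by
            intro n hn
            induction n with
            | zero => omega
            | succ m ih2 =>
                rcases Nat.eq_zero_or_pos m with hm | hm
                · subst hm; simpa [pow_one] using hDhull
                · rw [pow_succ]; exact hmulhull _ (ih2 hm) _ hDhull
          exact this k hk
        have : A * (D ^ k * A) ^ (n + 1) = (A * (D ^ k * A) ^ n) * (D ^ k * A) := by
          rw [pow_succ, mul_assoc]
        rw [this]
        exact hmulhull _ ih _ (hmulhull _ hDk _ (subset_convexHull ℝ S hA))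
  -- error bound by induction
  have herr : ∀ k : ℕ, 1 ≤ k → ∀ m : ℕ,
      |dotProduct v ((A * (D ^ k * A) ^ m).mulVec u) - t ^ (m + 1)|
        ≤ (β * (q ^ k * c)) * (m * (β + 1) ^ m) := by
    intro k hk m
    induction m with
    | zero =>
        simp only [pow_zero, mul_one, Nat.cast_zero, zero_mul, mul_zero, pow_one]
        rw [← ht]
        simp
    | succ n ih =>
        have hrw : A * (D ^ k * A) ^ (n + 1) = (A * (D ^ k * A) ^ n) * (D ^ k * A) := by
          rw [pow_succ, mul_assoc]
        set M₁ := A * (D ^ k * A) ^ n with hM₁def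
        have hM₁K : M₁ ∈ K := hullK (hEmem k hk n)
        have hM₁nn : ∀ i j, 0 ≤ M₁ i j := hM₁K.1
        have hf₁β : dotProduct v (M₁.mulVec u) ≤ β := (hfK M₁ hM₁K).2
        have hδ0 : (0:ℝ) ≤ β * (q ^ k * c) := by positivity
        have h1 : |dotProduct v ((M₁ * (D ^ k * A)).mulVec u)
            - (dotProduct v (M₁.mulVec u)) * t| ≤ β * (q ^ k * c) :=
          le_trans (key M₁ hM₁nn k)
            (mul_le_mul_of_nonneg_right hf₁β (by positivity))
        have h2 : |(dotProduct v (M₁.mulVec u)) * t - t ^ (n + 1 + 1)| =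
            t * |dotProduct v (M₁.mulVec u) - t ^ (n + 1)| := by
          have e : dotProduct v (M₁.mulVec u) * t - t ^ (n + 1 + 1)
              = t * (dotProduct v (M₁.mulVec u) - t ^ (n + 1)) := by ring
          rw [e, abs_mul, abs_of_nonneg htpos.le]
        have h3 : t * |dotProduct v (M₁.mulVec u) - t ^ (n + 1)|
            ≤ β * ((β * (q ^ k * c)) * (n * (β + 1) ^ n)) :=
          mul_le_mul htβ ih (abs_nonneg _) hβpos.le
        have htri : |dotProduct v ((M₁ * (D ^ k * A)).mulVec u) - t ^ (n + 1 + 1)|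
            ≤ |dotProduct v ((M₁ * (D ^ k * A)).mulVec u)
                - (dotProduct v (M₁.mulVec u)) * t|
              + |(dotProduct v (M₁.mulVec u)) * t - t ^ (n + 1 + 1)| :=
          abs_sub_le _ _ _
        have hP : (1:ℝ) ≤ (β + 1) ^ n := one_le_pow₀ (by linarith)
        have hn0 : (0:ℝ) ≤ (n:ℝ) := Nat.cast_nonneg n
        have hfact : (1:ℝ) + β * ((n:ℝ) * (β + 1) ^ n) ≤ ((n:ℝ) + 1) * (β + 1) ^ (n + 1) := by
          rw [pow_succ]
          nlinarith [hP, hn0, hβpos, mul_nonneg hn0 (le_trans zero_le_one hP),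
            mul_nonneg hβpos.le (le_trans zero_le_one hP)]
        have hmul2 := mul_le_mul_of_nonneg_left hfact hδ0
        rw [hrw]
        push_cast
        calc |dotProduct v ((M₁ * (D ^ k * A)).mulVec u) - t ^ (n + 1 + 1)|
            ≤ β * (q ^ k * c) + β * ((β * (q ^ k * c)) * (n * (β + 1) ^ n)) := by
              rw [h2] at htri
              linarith [h1, h3]
          _ ≤ (β * (q ^ k * c)) * (((n:ℝ) + 1) * (β + 1) ^ (n + 1)) := by nlinarith [hmul2]
  -- choose k to make the error small; conclude bounds on all powers of t
  have hbound : ∀ m : ℕ, α ≤ t ^ (m + 1) ∧ t ^ (m + 1) ≤ β := by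
    intro m
    have hkex : ∀ ε' : ℝ, 0 < ε' → ∃ k : ℕ, 1 ≤ k ∧
        (β * (q ^ k * c)) * ((m:ℝ) * (β + 1) ^ m) < ε' := by
      intro ε' hε'
      have h0 : Tendsto (fun k : ℕ => q ^ k) atTop (nhds 0) :=
        tendsto_pow_atTop_nhds_zero_of_lt_one hq0 hq1
      have h0' : Tendsto (fun k : ℕ => (β * (q ^ k * c)) * ((m:ℝ) * (β + 1) ^ m)) atTop
          (nhds 0) := by
        have := h0.mul_const (β * c * ((m:ℝ) * (β + 1) ^ m))
        rw [zero_mul] at this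
        convert this using 2 with k
        ring
      obtain ⟨k, hk1, hk2⟩ := ((eventually_ge_atTop 1).and
        (h0'.eventually_lt_const hε')).exists
      exact ⟨k, hk1, hk2⟩
    constructor
    · apply le_of_forall_pos_le_add
      intro ε' hε'
      obtain ⟨k, hk1, hksm⟩ := hkex ε' hε'
      have h := herr k hk1 m
      have hmem := hfK _ (hullK (hEmem k hk1 m))
      have habs := abs_le.mp h
      linarith [hmem.1, habs.1, habs.2]
    · apply le_of_forall_pos_le_add
      intro ε' hε'
      obtain ⟨k, hk1, hksm⟩ := hkex ε' hε'
      have h := herr k hk1 m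
      have hmem := hfK _ (hullK (hEmem k hk1 m))
      have habs := abs_le.mp h
      linarith [hmem.2, habs.1, habs.2]
  have hle1 : t ≤ 1 := by
    by_contra hgt
    push_neg at hgt
    have h0 := tendsto_pow_atTop_atTop_of_one_lt hgt
    obtain ⟨n, hn1, hn2⟩ := ((eventually_ge_atTop 1).and (h0.eventually_gt_atTop β)).exists
    have := (hbound (n - 1)).2
    rw [Nat.sub_add_cancel hn1] at this
    linarith
  have hge1 : 1 ≤ t := by
    by_contra hlt
    push_neg at hlt
    have h0 := tendsto_pow_atTop_nhds_zero_of_lt_one htpos.le hlt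
    obtain ⟨n, hn1, hn2⟩ := ((eventually_ge_atTop 1).and
      (h0.eventually_lt_const hαpos)).exists
    have := (hbound (n - 1)).1
    rw [Nat.sub_add_cancel hn1] at this
    linarith
  exact le_antisymm hle1 hge1
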